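/- Let D be an n×n matrix over ℤ/2 with D·D = 0, let V be an upper-triangular n×n matrix over ℤ/2 with all diagonal entries equal to 1, and suppose R = D·V is reduced. Let p be the number of indices j whose column R_j is nonzero, and let k be the number of indices i such that column R_i is zero and i is not equal to low(R, j) for any index j with nonzero column R_j. Then n = 2·p + k. (Matrix-level content of Theorem: the iterated Morse complex of a filtered complex with p finite and k infinite persistence intervals has exactly 2p + k cells.) -/
import Mathlib


/-- The `j`-th column of the matrix `R`. -/
def column {n : ℕ} (R : Matrix (Fin n) (Fin n) (ZMod 2)) (j : Fin n) : Fin n → ZMod 2 :=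
  fun i => R i j

/-- `low v` is the largest index at which the vector `v` over `ℤ/2` is nonzero
(`⊥` if `v = 0`). -/
def low {n : ℕ} (v : Fin n → ZMod 2) : WithBot (Fin n) :=
  (Finset.univ.filter (fun i => v i ≠ 0)).max

/-- `lowM R j` is the lowest-one position of the `j`-th column of `R`. -/
def lowM {n : ℕ} (R : Matrix (Fin n) (Fin n) (ZMod 2)) (j : Fin n) : WithBot (Fin n) :=
  low (column R j)

/-- A matrix over `ℤ/2` is reduced if its nonzero columns have pairwise distinct
lowest-one positions. -/
def ReducedMat {n : ℕ} (R : Matrix (Fin n) (Fin n) (ZMod 2)) : Prop :=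
  ∀ j k : Fin n, j ≠ k → column R j ≠ 0 → column R k ≠ 0 → lowM R j ≠ lowM R k

/-- A matrix is upper-triangular with all diagonal entries equal to `1`. -/
def IsUpperUnitriangular {n : ℕ} (V : Matrix (Fin n) (Fin n) (ZMod 2)) : Prop :=
  (∀ i j : Fin n, j < i → V i j = 0) ∧ ∀ i : Fin n, V i i = 1

lemma zmod2_eq_one {a : ZMod 2} (h : a ≠ 0) : a = 1 := by revert h; revert a; decide

lemma zmod2_add_eq_zero {a b : ZMod 2} (h : a + b = 0) : a = b := by
  revert h; revert a b; decide

lemma low_eq_bot_iff {n : ℕ} (v : Fin n → ZMod 2) : low v = ⊥ ↔ v = 0 := by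
  classical
  rw [low, Finset.max_eq_bot, Finset.filter_eq_empty_iff]
  constructor
  · intro h; funext i; simpa using h (Finset.mem_univ i)
  · intro h i _; simp [h]

lemma exists_low {n : ℕ} (v : Fin n → ZMod 2) (hv : v ≠ 0) :
    ∃ i : Fin n, low v = (i : WithBot (Fin n)) := by
  cases hlow : low v with
  | bot => exact absurd ((low_eq_bot_iff v).1 hlow) hv
  | coe i => exact ⟨i, rfl⟩

lemma low_eq_coe_iff {n : ℕ} (v : Fin n → ZMod 2) (i : Fin n) :
    low v = (i : WithBot (Fin n)) ↔ v i ≠ 0 ∧ ∀ m : Fin n, i < m → v m = 0 := by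
  classical
  constructor
  · intro h
    have hmem : i ∈ Finset.univ.filter (fun l => v l ≠ 0) := Finset.mem_of_max h
    refine ⟨(Finset.mem_filter.1 hmem).2, fun m hm => ?_⟩
    by_contra hvm
    have h1 : (m : WithBot (Fin n)) ≤ low v :=
      Finset.le_max (Finset.mem_filter.2 ⟨Finset.mem_univ m, hvm⟩)
    rw [h] at h1
    exact absurd (WithBot.coe_le_coe.mp h1) (not_le.mpr hm)
  · rintro ⟨h1, h2⟩
    refine le_antisymm (Finset.max_le ?_)
      (Finset.le_max (Finset.mem_filter.2 ⟨Finset.mem_univ i, h1⟩))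
    intro m hm
    by_cases h : m ≤ i
    · exact WithBot.coe_le_coe.mpr h
    · exact absurd (h2 m (not_le.mp h)) (Finset.mem_filter.1 hm).2

lemma unitri_mulVec {n : ℕ} {V : Matrix (Fin n) (Fin n) (ZMod 2)}
    (hV : IsUpperUnitriangular V) (y : Fin n → ZMod 2) (i : Fin n)
    (hy : ∀ m, i < m → y m = 0) :
    V.mulVec y i = y i ∧ ∀ l, i < l → V.mulVec y l = 0 := by
  constructor
  · show ∑ j, V i j * y j = y i
    rw [Finset.sum_eq_single i]
    · rw [hV.2 i, one_mul]
    · intro b _ hb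
      rcases lt_or_gt_of_ne hb with h | h
      · rw [hV.1 i b h, zero_mul]
      · rw [hy b h, mul_zero]
    · intro h; exact absurd (Finset.mem_univ i) h
  · intro l hl
    show ∑ j, V l j * y j = 0
    apply Finset.sum_eq_zero
    intro b _
    by_cases h : b ≤ i
    · rw [hV.1 l b (lt_of_le_of_lt h hl), zero_mul]
    · rw [hy b (not_le.mp h), mul_zero]

lemma low_mulVec {n : ℕ} {V : Matrix (Fin n) (Fin n) (ZMod 2)}
    (hV : IsUpperUnitriangular V) (y : Fin n → ZMod 2) :
    low (V.mulVec y) = low y := by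
  by_cases hy : y = 0
  · subst hy; rw [Matrix.mulVec_zero]
  · obtain ⟨i, hi⟩ := exists_low y hy
    obtain ⟨h1, h2⟩ := (low_eq_coe_iff y i).1 hi
    obtain ⟨e1, e2⟩ := unitri_mulVec hV y i h2
    rw [hi, low_eq_coe_iff]
    exact ⟨by rw [e1]; exact h1, e2⟩

lemma col_low_eq_zero {n : ℕ} {D V : Matrix (Fin n) (Fin n) (ZMod 2)}
    (hDD : D * D = 0) (hV : IsUpperUnitriangular V) (hR : ReducedMat (D * V))
    {j i : Fin n} (hj : column (D * V) j ≠ 0)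
    (hi : lowM (D * V) j = (i : WithBot (Fin n))) :
    column (D * V) i = 0 := by
  classical
  set R := D * V with hRdef
  have hbt : V.BlockTriangular id := fun a b hab => hV.1 a b hab
  have hunit : IsUnit V.det := by
    rw [Matrix.det_of_upperTriangular hbt]
    simp [hV.2]
  set x : Fin n → ZMod 2 := column R j with hx
  set y : Fin n → ZMod 2 := V⁻¹.mulVec x with hy
  have hVy : V.mulVec y = x := by
    rw [hy, Matrix.mulVec_mulVec, Matrix.mul_nonsing_inv V hunit, Matrix.one_mulVec]
  have hRy : R.mulVec y = 0 := by
    have h1 : R.mulVec y = D.mulVec x := by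
      rw [hRdef, ← Matrix.mulVec_mulVec, hVy]
    have h2 : D.mulVec x = fun l => (D * R) l j := by
      funext l
      simp [Matrix.mulVec, dotProduct, Matrix.mul_apply, hx, column]
    rw [h1, h2, hRdef, ← Matrix.mul_assoc, hDD, Matrix.zero_mul]
    funext l; simp
  have hlowy : low y = (i : WithBot (Fin n)) := by
    rw [← low_mulVec hV y, hVy]; exact hi
  obtain ⟨hyi, hylt⟩ := (low_eq_coe_iff y i).1 hlowy
  have hyi1 : y i = 1 := zmod2_eq_one hyi
  by_contra hcol
  set S : Finset (Fin n) :=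
    Finset.univ.filter (fun m => m < i ∧ y m ≠ 0 ∧ column R m ≠ 0) with hS
  have key : ∀ l, column R i l = ∑ m ∈ S, column R m l := by
    intro l
    have h0 : ∑ m, R l m * y m = 0 := by
      have := congrFun hRy l
      simpa [Matrix.mulVec, dotProduct] using this
    have hnot : ∀ m ∈ Finset.univ, m ∉ insert i S → R l m * y m = 0 := by
      intro m _ hm
      have hmi : m ≠ i := fun h => hm (by simp [h])
      have hmS : m ∉ S := fun h => hm (Finset.mem_insert_of_mem h)
      rcases lt_trichotomy m i with h | h | h
      · by_cases hym : y m = 0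
        · rw [hym, mul_zero]
        · by_cases hcm : column R m = 0
          · have h3 : R l m = 0 := by
              have := congrFun hcm l; simpa [column] using this
            rw [h3, zero_mul]
          · exact absurd (Finset.mem_filter.2 ⟨Finset.mem_univ m, h, hym, hcm⟩) hmS
      · exact absurd h hmi
      · rw [hylt m h, mul_zero]
    have hsplit : ∑ m ∈ insert i S, R l m * y m = 0 := by
      rw [← h0]
      exact Finset.sum_subset (Finset.subset_univ _) hnot
    have hiS : i ∉ S := by
      intro h
      exact absurd (Finset.mem_filter.1 h).2.1 (lt_irrefl i)
    rw [Finset.sum_insert hiS] at hsplit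
    have hterms : ∑ m ∈ S, R l m * y m = ∑ m ∈ S, column R m l := by
      apply Finset.sum_congr rfl
      intro m hm
      rw [zmod2_eq_one (Finset.mem_filter.1 hm).2.2.1, mul_one]; rfl
    rw [hyi1, mul_one, hterms] at hsplit
    exact zmod2_add_eq_zero hsplit
  have hSne : S.Nonempty := by
    rcases Finset.eq_empty_or_nonempty S with h | h
    · exfalso
      apply hcol
      funext l
      simp [key l, h]
    · exact h
  obtain ⟨m', hm'S, hm'max⟩ := Finset.exists_max_image S (lowM R) hSne
  obtain ⟨hm'lt, hym', hcm'⟩ := (Finset.mem_filter.1 hm'S).2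
  obtain ⟨i', hi'⟩ := exists_low (column R m') hcm'
  obtain ⟨hv1, hv2⟩ := (low_eq_coe_iff _ i').1 hi'
  have hlowi : lowM R i = (i' : WithBot (Fin n)) := by
    show low (column R i) = _
    rw [low_eq_coe_iff]
    constructor
    · have hsum : ∑ m ∈ S, column R m i' = column R m' i' := by
        apply Finset.sum_eq_single m'
        · intro b hb hbm'
          obtain ⟨hblt, hyb, hcb⟩ := (Finset.mem_filter.1 hb).2
          obtain ⟨ib, hib⟩ := exists_low (column R b) hcb
          have hle : lowM R b ≤ lowM R m' := hm'max b hb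
          have hne : lowM R b ≠ lowM R m' := hR b m' hbm' hcb hcm'
          have hcoe : (ib : WithBot (Fin n)) < (i' : WithBot (Fin n)) := by
            have e1 : lowM R b = (ib : WithBot (Fin n)) := hib
            have e2 : lowM R m' = (i' : WithBot (Fin n)) := hi'
            rw [← e1, ← e2]
            exact lt_of_le_of_ne hle hne
          exact ((low_eq_coe_iff _ ib).1 hib).2 i' (WithBot.coe_lt_coe.mp hcoe)
        · intro h; exact absurd hm'S h
      rw [key i', hsum]
      exact hv1
    · intro l hl
      rw [key l]
      apply Finset.sum_eq_zero
      intro b hb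
      obtain ⟨hblt, hyb, hcb⟩ := (Finset.mem_filter.1 hb).2
      obtain ⟨ib, hib⟩ := exists_low (column R b) hcb
      have hle : (ib : WithBot (Fin n)) ≤ (i' : WithBot (Fin n)) := by
        have e1 : lowM R b = (ib : WithBot (Fin n)) := hib
        have e2 : lowM R m' = (i' : WithBot (Fin n)) := hi'
        rw [← e1, ← e2]
        exact hm'max b hb
      exact ((low_eq_coe_iff _ ib).1 hib).2 l (lt_of_le_of_lt (WithBot.coe_le_coe.mp hle) hl)
  have hfinal : lowM R i = lowM R m' := by
    rw [hlowi]; exact hi'.symm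
  exact hR i m' (fun h => absurd h (ne_of_gt hm'lt)) hcol hcm' hfinal

lemma count_lemma {n : ℕ} (R : Matrix (Fin n) (Fin n) (ZMod 2)) (hR : ReducedMat R)
    (hzero : ∀ {j i : Fin n}, column R j ≠ 0 → lowM R j = (i : WithBot (Fin n)) →
      column R i = 0) :
    n = 2 * Nat.card {j : Fin n // column R j ≠ 0} +
      Nat.card {i : Fin n // column R i = 0 ∧
        ∀ j : Fin n, column R j ≠ 0 → lowM R j ≠ (i : WithBot (Fin n))} := by
  classical
  have hcardA : Nat.card {j : Fin n // column R j ≠ 0}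
      = (Finset.univ.filter (fun j => column R j ≠ 0)).card := by
    rw [Nat.card_eq_fintype_card]; exact Fintype.card_subtype _
  have hcardK : Nat.card {i : Fin n // column R i = 0 ∧
      ∀ j : Fin n, column R j ≠ 0 → lowM R j ≠ (i : WithBot (Fin n))}
      = (Finset.univ.filter (fun i => column R i = 0 ∧
      ∀ j : Fin n, column R j ≠ 0 → lowM R j ≠ (i : WithBot (Fin n)))).card := by
    rw [Nat.card_eq_fintype_card]; exact Fintype.card_subtype _
  have himg : (Finset.univ.filter (fun j => column R j ≠ 0)).image (lowM R)
      = (Finset.univ.filter (fun i => column R i = 0 ∧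
        ¬ ∀ j : Fin n, column R j ≠ 0 → lowM R j ≠ (i : WithBot (Fin n)))).image
          (fun i : Fin n => (i : WithBot (Fin n))) := by
    ext t
    rw [Finset.mem_image, Finset.mem_image]
    constructor
    · rintro ⟨j, hj, rfl⟩
      have hj' : column R j ≠ 0 := (Finset.mem_filter.1 hj).2
      obtain ⟨i, hi⟩ := exists_low (column R j) hj'
      exact ⟨i, Finset.mem_filter.2 ⟨Finset.mem_univ i,
        hzero hj' hi, fun hQ => hQ j hj' hi⟩, hi.symm⟩
    · rintro ⟨i, hi, rfl⟩
      have hnq := (Finset.mem_filter.1 hi).2.2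
      push_neg at hnq
      obtain ⟨j, hj, hji⟩ := hnq
      exact ⟨j, Finset.mem_filter.2 ⟨Finset.mem_univ j, hj⟩, hji⟩
  have hAB : (Finset.univ.filter (fun j => column R j ≠ 0)).card
      = (Finset.univ.filter (fun i => column R i = 0 ∧
        ¬ ∀ j : Fin n, column R j ≠ 0 → lowM R j ≠ (i : WithBot (Fin n)))).card := by
    have h1 := Finset.card_image_of_injOn (s := Finset.univ.filter (fun j => column R j ≠ 0))
      (f := lowM R) (by
        intro a ha b hb hab
        by_contra hne
        exact hR a b hne (Finset.mem_filter.1 ha).2 (Finset.mem_filter.1 hb).2 hab)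
    have h2 := Finset.card_image_of_injective
      (Finset.univ.filter (fun i => column R i = 0 ∧
        ¬ ∀ j : Fin n, column R j ≠ 0 → lowM R j ≠ (i : WithBot (Fin n))))
      (Option.some_injective (Fin n))
    rw [← h1, himg]
    exact h2
  have hsplit1 : (Finset.univ.filter (fun j => column R j ≠ 0)).card
      + (Finset.univ.filter (fun i => column R i = 0)).card = n := by
    have h := Finset.card_filter_add_card_filter_not
      (s := (Finset.univ : Finset (Fin n))) (p := fun j => column R j ≠ 0)
    simp only [not_not] at h
    rw [Finset.card_fin] at h
    exact h
  have hsplit2 : (Finset.univ.filter (fun i => column R i = 0 ∧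
        ∀ j : Fin n, column R j ≠ 0 → lowM R j ≠ (i : WithBot (Fin n)))).card
      + (Finset.univ.filter (fun i => column R i = 0 ∧
        ¬ ∀ j : Fin n, column R j ≠ 0 → lowM R j ≠ (i : WithBot (Fin n)))).card
      = (Finset.univ.filter (fun i => column R i = 0)).card := by
    have h := Finset.card_filter_add_card_filter_not
      (s := Finset.univ.filter (fun i : Fin n => column R i = 0))
      (p := fun i => ∀ j : Fin n, column R j ≠ 0 → lowM R j ≠ (i : WithBot (Fin n)))
    rw [Finset.filter_filter, Finset.filter_filter] at h
    exact h
  rw [hcardA, hcardK]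
  omega

/-- If `R = D·V` is a reduced form of a boundary matrix `D` (with `D·D = 0`), `p` is
the number of nonzero columns of `R` (finite persistence pairs) and `k` is the number
of zero columns of `R` whose index is not the lowest-one position of any nonzero
column (infinite persistence intervals), then `n = 2·p + k`. -/
theorem card_eq_two_mul_pairs_add_infinite {n : ℕ}
    (D V : Matrix (Fin n) (Fin n) (ZMod 2))
    (hDD : D * D = 0) (hV : IsUpperUnitriangular V) (hR : ReducedMat (D * V)) :
    n = 2 * Nat.card {j : Fin n // column (D * V) j ≠ 0} +
      Nat.card {i : Fin n // column (D * V) i = 0 ∧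
        ∀ j : Fin n, column (D * V) j ≠ 0 → lowM (D * V) j ≠ (i : WithBot (Fin n))} := by
  exact count_lemma (D * V) hR (fun hj hi => col_low_eq_zero hDD hV hR hj hi)
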